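/- If φ is a root of (h, g) whose restriction to h_r is neither zero nor an h_r-weight of p, then the root vector e_φ lies in r and φ vanishes on h_p. -/

import Mathlib

/-- A Lie algebra is reductive if its radical coincides with its center. -/
def LieAlgebra.IsReductive' (R L : Type*) [CommRing R] [LieRing L] [LieAlgebra R L] : Prop :=
  LieAlgebra.radical R L = LieAlgebra.center R L

/-- If `φ` is a root of `(h, g)` whose restriction to `h_r` is neither
zero nor an `h_r`-weight of `p`, then the root vector `e_φ` lies in `r` and `φ`
vanishes on `h_p`. -/
theorem stmt9 (g : Type*) [LieRing g] [LieAlgebra ℂ g] [Module.Finite ℂ g]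
    [LieAlgebra.IsSemisimple ℂ g]
    (B : LinearMap.BilinForm ℂ g) (hBsymm : B.IsSymm)
    (hBinv : ∀ x y z : g, B ⁅x, y⁆ z = B x ⁅y, z⁆)
    (hBnd : B.Nondegenerate)
    (r : LieSubalgebra ℂ g) (hred : LieAlgebra.IsReductive' ℂ r)
    (hBr : (B.restrict r.toSubmodule).Nondegenerate)
    (p : Submodule ℂ g) (hp : p = B.orthogonal r.toSubmodule)
    (hcompl : IsCompl r.toSubmodule p)
    (hbr : ∀ x ∈ r, ∀ y ∈ p, ⁅x, y⁆ ∈ p)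
    -- compatible Cartan subalgebras `h_r ⊆ h` and `h_p = h ∩ p`:
    (hr' : LieSubalgebra ℂ r) (hhr' : hr'.IsCartanSubalgebra)
    (hr : LieSubalgebra ℂ g) (hhr : hr = hr'.map r.incl)
    (h : LieSubalgebra ℂ g) (hh : h.IsCartanSubalgebra) (hrh : hr ≤ h)
    (hpsub : Submodule ℂ g) (hhp : hpsub = h.toSubmodule ⊓ p)
    -- a root `φ` of `(h, g)` with root vector `e`:
    (φ : Module.Dual ℂ g) (e : g) (he : e ≠ 0)
    (hroot : ∀ z ∈ h, ⁅z, e⁆ = φ z • e) (hφ0 : ∃ z ∈ h, φ z ≠ 0)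
    -- `φ|h_r` is nonzero:
    (hφhr : ∃ x ∈ hr, φ x ≠ 0)
    -- `φ|h_r` is not an `h_r`-weight of `p`:
    (hφΓ : ¬ ∃ w ∈ p, w ≠ 0 ∧ ∀ x ∈ hr, ⁅x, w⁆ = φ x • w) :
    e ∈ r ∧ ∀ y ∈ hpsub, φ y = 0 := by
  -- elements of hr lie in r
  have hxr : ∀ x ∈ hr, x ∈ r := by
    intro x hx
    rw [hhr, LieSubalgebra.mem_map] at hx
    obtain ⟨y, -, rfl⟩ := hx
    exact y.2
  -- decompose e = er + ep
  obtain ⟨er, ep, her, hep, heq⟩ :=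
    Submodule.codisjoint_iff_exists_add_eq.mp hcompl.codisjoint e
  have hdisj := hcompl.disjoint
  -- ep is a weight vector of weight φ|hr
  have hwt : ∀ x ∈ hr, ⁅x, ep⁆ = φ x • ep := by
    intro x hx
    have hxh : x ∈ h := hrh hx
    have h1 : ⁅x, er⁆ + ⁅x, ep⁆ = φ x • er + φ x • ep := by
      rw [← lie_add, ← smul_add, heq, hroot x hxh]
    have ha : ⁅x, er⁆ - φ x • er ∈ r.toSubmodule :=
      Submodule.sub_mem _ (r.lie_mem (hxr x hx) her) (Submodule.smul_mem _ _ her)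
    have hb : ⁅x, ep⁆ - φ x • ep ∈ p :=
      Submodule.sub_mem _ (hbr x (hxr x hx) ep hep) (Submodule.smul_mem _ _ hep)
    have hba : ⁅x, ep⁆ - φ x • ep = -(⁅x, er⁆ - φ x • er) := by
      rw [neg_sub, sub_eq_sub_iff_add_eq_add, add_comm]
      exact h1
    have hb' : ⁅x, ep⁆ - φ x • ep ∈ r.toSubmodule := by
      rw [hba]; exact Submodule.neg_mem _ ha
    have : ⁅x, ep⁆ - φ x • ep = 0 :=
      Submodule.disjoint_def.mp hdisj _ hb' hb
    exact sub_eq_zero.mp this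
  -- ep must be zero
  have hep0 : ep = 0 := by
    by_contra hne
    exact hφΓ ⟨ep, hep, hne, hwt⟩
  have heqr : e = er := by rw [← heq, hep0, add_zero]
  have heR : e ∈ r := heqr ▸ her
  refine ⟨heR, fun y hy => ?_⟩
  rw [hhp, Submodule.mem_inf] at hy
  obtain ⟨hyh, hyp⟩ := hy
  have h1 : φ y • e ∈ r.toSubmodule := Submodule.smul_mem _ _ heR
  have h2 : φ y • e ∈ p := by
    rw [← hroot y hyh]
    have : ⁅y, e⁆ = -⁅e, y⁆ := by rw [lie_skew]
    rw [this]
    exact Submodule.neg_mem _ (hbr e heR y hyp)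
  have h0 : φ y • e = 0 := Submodule.disjoint_def.mp hdisj _ h1 h2
  rcases smul_eq_zero.mp h0 with h | h
  · exact h
  · exact absurd h he
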